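/- If Γ is the disjoint union of α simplices, each a d-simplex on pairwise disjoint vertex sets, then the h-vector of Γ satisfies h_0 = 1 and h_k = (−1)^{k+1} (α − 1) C(d+1, k) for all 1 ≤ k ≤ d. -/

import Mathlib

/-- The simplicial complex which is the disjoint union of the full power sets
(simplices) on the vertex sets `V i`. -/
def complexOf {α : ℕ} (V : Fin α → Finset ℕ) : Finset (Finset ℕ) :=
  Finset.univ.biUnion fun i => (V i).powerset

/-- `fvec V i` is the number of faces of cardinality `i`; `fvec V 0 = 1` counts the
empty face. -/
def fvec {α : ℕ} (V : Fin α → Finset ℕ) (i : ℕ) : ℕ :=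
  ((complexOf V).filter fun S => S.card = i).card

/-- The h-vector: `hvec D f k = ∑_{i=0}^{k} (-1)^(k-i) C(D-i, D-k) f i`, with `D = d+1`. -/
def hvec (D : ℕ) (f : ℕ → ℕ) (k : ℕ) : ℤ :=
  ∑ i ∈ Finset.range (k + 1), (-1 : ℤ) ^ (k - i) * ((D - i).choose (D - k)) * f i

lemma fvec_zero {α : ℕ} (hα : 0 < α) (V : Fin α → Finset ℕ) : fvec V 0 = 1 := by
  have h : (complexOf V).filter (fun S => S.card = 0) = {∅} := by
    ext S
    simp only [Finset.mem_filter, Finset.mem_singleton, Finset.card_eq_zero, complexOf,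
      Finset.mem_biUnion, Finset.mem_powerset, Finset.mem_univ, true_and]
    constructor
    · rintro ⟨_, h⟩; exact h
    · rintro rfl; exact ⟨⟨⟨0, hα⟩, Finset.empty_subset _⟩, rfl⟩
  rw [fvec, h, Finset.card_singleton]

lemma fvec_pos {α : ℕ} (d : ℕ) (V : Fin α → Finset ℕ)
    (hdisj : ∀ i j : Fin α, i ≠ j → Disjoint (V i) (V j))
    (hcard : ∀ i, (V i).card = d + 1) {i : ℕ} (hi : 1 ≤ i) :
    fvec V i = α * (d + 1).choose i := by
  have h1 : (complexOf V).filter (fun S => S.card = i)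
      = Finset.univ.biUnion (fun j => (V j).powersetCard i) := by
    ext S
    simp only [Finset.mem_filter, complexOf, Finset.mem_biUnion, Finset.mem_powerset,
      Finset.mem_univ, true_and, Finset.mem_powersetCard]
    constructor
    · rintro ⟨⟨j, hj⟩, hc⟩; exact ⟨j, hj, hc⟩
    · rintro ⟨j, hj, hc⟩; exact ⟨⟨j, hj⟩, hc⟩
  rw [fvec, h1, Finset.card_biUnion]
  · rw [Finset.sum_congr rfl (fun j _ => by
      rw [Finset.card_powersetCard, hcard j])]
    simp [mul_comm]
  · intro a _ b _ hab
    simp only [Function.onFun]; rw [Finset.disjoint_left]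
    intro S hSa hSb
    rw [Finset.mem_powersetCard] at hSa hSb
    obtain ⟨x, hx⟩ := Finset.card_pos.mp (by omega : 0 < S.card)
    exact (Finset.disjoint_left.mp (hdisj a b hab)) (hSa.1 hx) (hSb.1 hx)

theorem stmt3 {α : ℕ} (hα : 0 < α) (d : ℕ) (V : Fin α → Finset ℕ)
    (hdisj : ∀ i j : Fin α, i ≠ j → Disjoint (V i) (V j))
    (hcard : ∀ i, (V i).card = d + 1) :
    hvec (d + 1) (fvec V) 0 = 1 ∧
    ∀ k, 1 ≤ k → k ≤ d →
      hvec (d + 1) (fvec V) k = (-1 : ℤ) ^ (k + 1) * ((α : ℤ) - 1) * ((d + 1).choose k) := by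
  constructor
  · simp [hvec, fvec_zero hα V]
  · intro k hk1 hkd
    rw [hvec, Finset.sum_range_succ']
    have hstep : ∑ i ∈ Finset.range k,
        (-1 : ℤ) ^ (k - (i + 1)) * ((d + 1 - (i + 1)).choose (d + 1 - k)) * (fvec V (i + 1))
        = (α : ℤ) * ((d + 1).choose k) *
            ∑ i ∈ Finset.range k, (-1 : ℤ) ^ (k - (i + 1)) * (k.choose (i + 1)) := by
      rw [Finset.mul_sum]
      apply Finset.sum_congr rfl
      intro i hi
      rw [Finset.mem_range] at hi
      rw [fvec_pos d V hdisj hcard (Nat.le_add_left 1 i)]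
      have e1 : (d + 1 - (i + 1)).choose (d + 1 - k)
          = (d + 1 - (i + 1)).choose (k - (i + 1)) := by
        rw [← Nat.choose_symm (by omega : k - (i + 1) ≤ d + 1 - (i + 1))]
        congr 1
        omega
      have e2 : ((d + 1).choose k : ℤ) * (k.choose (i + 1)) =
          ((d + 1).choose (i + 1) : ℤ) * ((d - i).choose (k - (i + 1))) := by
        have h := Nat.choose_mul (n := d + 1) (by omega : i + 1 ≤ k)
        rw [show d + 1 - (i + 1) = d - i from by omega] at h
        exact_mod_cast congrArg (Nat.cast (R := ℤ)) h
      rw [e1]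
      push_cast
      linear_combination (-((-1 : ℤ) ^ (k - (i + 1)))) * (α : ℤ) * e2
    rw [hstep, fvec_zero hα V]
    have key : ∑ i ∈ Finset.range k, (-1 : ℤ) ^ (k - (i + 1)) * (k.choose (i + 1))
        = -((-1 : ℤ) ^ k) := by
      have h2 : ∑ j ∈ Finset.range (k + 1), (-1 : ℤ) ^ (k - j) * (k.choose j) = 0 := by
        have hcong : ∑ j ∈ Finset.range (k + 1), (-1 : ℤ) ^ (k - j) * (k.choose j)
            = (-1 : ℤ) ^ k * ∑ j ∈ Finset.range (k + 1), (-1 : ℤ) ^ j * (k.choose j) := by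
          rw [Finset.mul_sum]
          apply Finset.sum_congr rfl
          intro j hj
          rw [Finset.mem_range] at hj
          have h1 : (-1 : ℤ) ^ (k - j) * (-1) ^ j = (-1) ^ k := by
            rw [← pow_add]; congr 1; omega
          have h2 : ((-1 : ℤ) ^ j) * ((-1 : ℤ) ^ j) = 1 := by
            rw [← pow_add, ← two_mul, pow_mul]; norm_num
          have hs : (-1 : ℤ) ^ (k - j) = (-1) ^ k * (-1) ^ j := by
            linear_combination ((-1 : ℤ) ^ j) * h1 - ((-1 : ℤ) ^ (k - j)) * h2
          rw [hs]; ring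
        rw [hcong, Int.alternating_sum_range_choose_of_ne (by omega : k ≠ 0), mul_zero]
      rw [Finset.sum_range_succ'] at h2
      simp only [Nat.sub_zero, Nat.choose_zero_right, Nat.cast_one, mul_one] at h2
      linarith
    rw [key]
    have hsymm : (d + 1 - 0 : ℕ).choose (d + 1 - k) = (d + 1).choose k := by
      simpa using Nat.choose_symm (by omega : k ≤ d + 1)
    rw [hsymm]
    simp only [Nat.sub_zero]
    push_cast
    ring
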